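/- Let N ≥ 1, p = 2N+1 and J_a be the p×p tridiagonal matrix with diagonal (v_1,...,v_p) and alternating off-diagonal entries a,1,a,1,...,a. If λ = v_1 is an eigenvalue of J_a for infinitely many a ∈ (0,2], then v_{2k+1} = v_1 for all k = 1,...,N. -/

import Mathlib

/-- The nanoribbon Jacobi matrix `J_a` with diagonal `(v_1,…,v_{2N+1})` and alternating
off-diagonal entries `a,1,a,1,…,a`. -/
def Ja (N : ℕ) (a : ℝ) (v : ℕ → ℝ) : Matrix (Fin (2*N+1)) (Fin (2*N+1)) ℝ :=
  Matrix.of fun i j =>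
    if i = j then v ((i : ℕ) + 1)
    else if (j : ℕ) = (i : ℕ) + 1 then (if (i : ℕ) % 2 = 0 then a else 1)
    else if (i : ℕ) = (j : ℕ) + 1 then (if (j : ℕ) % 2 = 0 then a else 1)
    else 0

open Polynomial in
/-- Transfer polynomials for the flat-band recursion. -/
noncomputable def Pol (d : ℕ → ℝ) : ℕ → ℝ[X]
  | 0 => 0
  | 1 => X
  | (n+2) =>
      if n % 2 = 0 then -(X * Pol d n + C (d (n+1)) * Pol d (n+1))
      else -(X^3 * Pol d n + X * C (d (n+1)) * Pol d (n+1))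

open Polynomial

lemma Pol_even (d : ℕ → ℝ) (n : ℕ) :
    Pol d (2*n+2) = -(X * Pol d (2*n) + C (d (2*n+1)) * Pol d (2*n+1)) := by
  show Pol d ((2*n)+2) = _
  rw [Pol, if_pos (by omega)]

lemma Pol_odd (d : ℕ → ℝ) (n : ℕ) :
    Pol d (2*n+3) = -(X^3 * Pol d (2*n+1) + X * C (d (2*n+2)) * Pol d (2*n+2)) := by
  show Pol d ((2*n+1)+2) = _
  rw [Pol, if_neg (by omega)]

lemma Pol_coeff (d : ℕ → ℝ) (k : ℕ) :
    (∀ j, 3*k ≤ j + 1 → (Pol d (2*k)).coeff j = 0) ∧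
    (Pol d (2*k+1)).coeff (3*k+1) = (-1)^k ∧
    (∀ j, 3*k+2 ≤ j → (Pol d (2*k+1)).coeff j = 0) := by
  induction k with
  | zero =>
    refine ⟨fun j _ => by simp [Pol], by simp [Pol], fun j hj => ?_⟩
    show (X : ℝ[X]).coeff j = 0
    rw [coeff_X, if_neg (by omega)]
  | succ k ih =>
    obtain ⟨hC, hA, hB⟩ := ih
    have hC' : ∀ j, 3*(k+1) ≤ j + 1 → (Pol d (2*(k+1))).coeff j = 0 := by
      intro j hj
      obtain ⟨j', rfl⟩ : ∃ j', j = j' + 1 := ⟨j - 1, by omega⟩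
      rw [show 2*(k+1) = 2*k+2 by ring, Pol_even, coeff_neg, coeff_add, coeff_X_mul,
        coeff_C_mul, hC j' (by omega), hB _ (by omega)]
      ring
    have hC2 : ∀ j, 3*k+3 ≤ j + 1 → (Pol d (2*k+2)).coeff j = 0 := by
      intro j hj
      rw [show 2*k+2 = 2*(k+1) by ring]
      exact hC' j (by omega)
    refine ⟨hC', ?_, ?_⟩
    · rw [show 2*(k+1)+1 = 2*k+3 by ring, Pol_odd, coeff_neg, coeff_add,
        show 3*(k+1)+1 = (3*k+1)+3 by ring, coeff_X_pow_mul, hA, mul_assoc,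
        show (3*k+1)+3 = (3*k+3)+1 by ring, coeff_X_mul, coeff_C_mul,
        hC2 _ (by omega)]
      ring
    · intro j hj
      obtain ⟨m, rfl⟩ : ∃ m, j = m + 3 := ⟨j - 3, by omega⟩
      rw [show 2*(k+1)+1 = 2*k+3 by ring, Pol_odd, coeff_neg, coeff_add,
        coeff_X_pow_mul, hB m (by omega), mul_assoc,
        show m+3 = (m+2)+1 by ring, coeff_X_mul, coeff_C_mul, hC2 _ (by omega)]
      ring

lemma Pol_down (d : ℕ → ℝ) :
    ∀ k, X * Pol d (2*k) + C (d (2*k+1)) * Pol d (2*k+1) = 0 →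
      ∀ m, 1 ≤ m → m ≤ k → d (2*m+1) = 0 := by
  intro k
  induction k with
  | zero => intro _ m h1 h2; omega
  | succ k ih =>
    intro hQ m h1 h2
    obtain ⟨hC, hA, _⟩ := Pol_coeff d (k+1)
    have hd : d (2*(k+1)+1) = 0 := by
      have hc := congrArg (fun q : ℝ[X] => q.coeff (3*(k+1)+1)) hQ
      simp only [coeff_add, coeff_C_mul, coeff_zero] at hc
      rw [coeff_X_mul, hC _ (by omega), hA] at hc
      rcases Nat.even_or_odd (k+1) with he | ho
      · rw [he.neg_one_pow] at hc; linarith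
      · rw [ho.neg_one_pow] at hc; linarith
    rcases Nat.lt_or_ge m (k+1) with hm | hm
    · apply ih _ m h1 (by omega)
      have hP : Pol d (2*(k+1)) = 0 := by
        rw [hd, map_zero, zero_mul, add_zero] at hQ
        rcases mul_eq_zero.mp hQ with h | h
        · exact absurd h X_ne_zero
        · exact h
      have h2 := Pol_even d k
      rw [show 2*k+2 = 2*(k+1) by ring, hP] at h2
      have := h2.symm
      rwa [neg_eq_zero] at this
    · have : m = k+1 := by omega
      rw [this]
      exact hd

lemma key_eval (N : ℕ) (hN : 1 ≤ N) (v : ℕ → ℝ) (a : ℝ) (ha : a ≠ 0)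
    (y : Fin (2*N+1) → ℝ) (hy0 : y ≠ 0) (heig : (Ja N a v).mulVec y = v 1 • y) :
    Polynomial.eval a (X * Pol (fun n => v n - v 1) (2*N)
      + C (v (2*N+1) - v 1) * Pol (fun n => v n - v 1) (2*N+1)) = 0 := by
  set d : ℕ → ℝ := fun n => v n - v 1 with hd
  set y' : ℕ → ℝ := fun n => if h : n < 2*N+1 then y ⟨n, h⟩ else 0 with hy'
  have hy'eq : ∀ j : Fin (2*N+1), y j = y' (j : ℕ) := by
    intro j
    simp only [hy']
    rw [dif_pos j.isLt]
  have hy'out : ∀ n, 2*N+1 ≤ n → y' n = 0 := by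
    intro n hn
    simp only [hy']
    rw [dif_neg (by omega)]
  have hrow : ∀ r : Fin (2*N+1), ∑ j : Fin (2*N+1), Ja N a v r j * y j = v 1 * y r := by
    intro r
    have := congrFun heig r
    simpa [Matrix.mulVec, dotProduct] using this
  -- row 0
  have row0 : a * y' 1 = 0 := by
    have e0 : ∀ j : Fin (2*N+1), Ja N a v ⟨0, by omega⟩ j * y j =
        (if (j:ℕ) = 0 then v 1 * y' 0 else 0) + (if (j:ℕ) = 1 then a * y' 1 else 0) := by
      intro j
      rw [hy'eq j]
      simp only [Ja, Matrix.of_apply, Fin.ext_iff, Fin.val_mk]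
      by_cases h1 : (j:ℕ) = 0
      · rw [h1]; simp
      · by_cases h2 : (j:ℕ) = 1
        · rw [h2]; simp
        · have c1 : ¬((0:ℕ) = (j:ℕ)) := by omega
          have c3 : ¬((0:ℕ) = (j:ℕ)+1) := by omega
          simp [c1, c3, h1, h2]
    have h0 : ∑ j ∈ Finset.range (2*N+1),
        ((if j = 0 then v 1 * y' 0 else 0) + (if j = 1 then a * y' 1 else 0)) = v 1 * y' 0 := by
      calc ∑ j ∈ Finset.range (2*N+1),
            ((if j = 0 then v 1 * y' 0 else 0) + (if j = 1 then a * y' 1 else 0))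
          = ∑ j : Fin (2*N+1),
            ((if (j:ℕ) = 0 then v 1 * y' 0 else 0) + (if (j:ℕ) = 1 then a * y' 1 else 0)) :=
            (Fin.sum_univ_eq_sum_range
              (fun j => (if j = 0 then v 1 * y' 0 else 0) + (if j = 1 then a * y' 1 else 0))
              (2*N+1)).symm
        _ = ∑ j : Fin (2*N+1), Ja N a v ⟨0, by omega⟩ j * y j :=
            Finset.sum_congr rfl (fun j _ => (e0 j).symm)
        _ = v 1 * y ⟨0, by omega⟩ := hrow _
        _ = v 1 * y' 0 := by rw [hy'eq]
    rw [Finset.sum_add_distrib,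
      Finset.sum_ite_eq' (Finset.range (2*N+1)) 0,
      Finset.sum_ite_eq' (Finset.range (2*N+1)) 1,
      if_pos (Finset.mem_range.mpr (by omega)),
      if_pos (Finset.mem_range.mpr (by omega))] at h0
    linarith
  -- rows 1..2N
  have rowS : ∀ i : ℕ, i + 1 < 2*N+1 →
      (if i % 2 = 0 then a else 1) * y' i + d (i+2) * y' (i+1)
        + (if (i+1) % 2 = 0 then a else 1) * y' (i+2) = 0 := by
    intro i hi
    have e0 : ∀ j : Fin (2*N+1), Ja N a v ⟨i+1, hi⟩ j * y j =
        (if (j:ℕ) = i then (if i % 2 = 0 then a else 1) * y' i else 0)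
        + (if (j:ℕ) = i+1 then v (i+1+1) * y' (i+1) else 0)
        + (if (j:ℕ) = i+2 then (if (i+1) % 2 = 0 then a else 1) * y' (i+2) else 0) := by
      intro j
      rw [hy'eq j]
      simp only [Ja, Matrix.of_apply, Fin.ext_iff, Fin.val_mk]
      by_cases h1 : (j:ℕ) = i
      · rw [h1]
        have c1 : ¬(i+1 = i) := by omega
        have c2 : ¬(i = i+1+1) := by omega
        simp [c1, c2]
      · by_cases h2 : (j:ℕ) = i+1
        · rw [h2]
          have c2 : ¬(i+1 = i+1+1) := by omega
          have c4 : ¬(i+1 = i) := by omega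
          have c5 : ¬(i+1 = i+2) := by omega
          simp [c2, c4, c5]
        · by_cases h3 : (j:ℕ) = i+2
          · rw [h3]
            have c1 : ¬(i+1 = i+2) := by omega
            have c4 : ¬(i+2 = i) := by omega
            have c5 : ¬(i+2 = i+1) := by omega
            simp [c1, c4, c5]
          · have c1 : ¬((i+1:ℕ) = (j:ℕ)) := by omega
            have c2 : ¬((j:ℕ) = i+1+1) := by omega
            have c3 : ¬((i+1:ℕ) = (j:ℕ)+1) := by omega
            simp [c1, c2, c3, h1, h2, h3, Ne.symm h1]
    have h0 : ∑ j ∈ Finset.range (2*N+1),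
        ((if j = i then (if i % 2 = 0 then a else 1) * y' i else 0)
        + (if j = i+1 then v (i+1+1) * y' (i+1) else 0)
        + (if j = i+2 then (if (i+1) % 2 = 0 then a else 1) * y' (i+2) else 0))
        = v 1 * y' (i+1) := by
      calc ∑ j ∈ Finset.range (2*N+1),
            ((if j = i then (if i % 2 = 0 then a else 1) * y' i else 0)
            + (if j = i+1 then v (i+1+1) * y' (i+1) else 0)
            + (if j = i+2 then (if (i+1) % 2 = 0 then a else 1) * y' (i+2) else 0))
          = ∑ j : Fin (2*N+1),
            ((if (j:ℕ) = i then (if i % 2 = 0 then a else 1) * y' i else 0)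
            + (if (j:ℕ) = i+1 then v (i+1+1) * y' (i+1) else 0)
            + (if (j:ℕ) = i+2 then (if (i+1) % 2 = 0 then a else 1) * y' (i+2) else 0)) :=
            (Fin.sum_univ_eq_sum_range
              (fun j => (if j = i then (if i % 2 = 0 then a else 1) * y' i else 0)
              + (if j = i+1 then v (i+1+1) * y' (i+1) else 0)
              + (if j = i+2 then (if (i+1) % 2 = 0 then a else 1) * y' (i+2) else 0))
              (2*N+1)).symm
        _ = ∑ j : Fin (2*N+1), Ja N a v ⟨i+1, hi⟩ j * y j :=
            Finset.sum_congr rfl (fun j _ => (e0 j).symm)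
        _ = v 1 * y ⟨i+1, hi⟩ := hrow _
        _ = v 1 * y' (i+1) := by rw [hy'eq]
    rw [Finset.sum_add_distrib, Finset.sum_add_distrib,
      Finset.sum_ite_eq' (Finset.range (2*N+1)) i,
      Finset.sum_ite_eq' (Finset.range (2*N+1)) (i+1),
      Finset.sum_ite_eq' (Finset.range (2*N+1)) (i+2),
      if_pos (Finset.mem_range.mpr (by omega)),
      if_pos (Finset.mem_range.mpr (by omega))] at h0
    have hthird : (if i+2 ∈ Finset.range (2*N+1)
        then (if (i+1) % 2 = 0 then a else 1) * y' (i+2) else 0)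
        = (if (i+1) % 2 = 0 then a else 1) * y' (i+2) := by
      by_cases hcase : i+2 ∈ Finset.range (2*N+1)
      · rw [if_pos hcase]
      · rw [if_neg hcase, hy'out (i+2) (by simp at hcase; omega)]
        ring
    rw [hthird] at h0
    have hd2 : d (i+2) = v (i+1+1) - v 1 := by simp [hd]
    rw [hd2]
    ring_nf
    ring_nf at h0
    linarith
  -- main induction
  have main : ∀ i, i < 2*N+1 → a^(i+1) * y' i = eval a (Pol d (i+1)) * y' 0 := by
    intro i
    induction i using Nat.strong_induction_on with
    | _ i ih =>
      match i with
      | 0 => intro _; simp [Pol]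
      | 1 =>
        intro _
        have hP2 : Pol d 2 = 0 := by
          have := Pol_even d 0
          simpa [Pol, hd] using this
        rw [hP2]
        simp only [eval_zero, zero_mul]
        calc a^2 * y' 1 = a * (a * y' 1) := by ring
        _ = 0 := by rw [row0]; ring
      | (m+2) =>
        intro hlt
        have h1 := ih m (by omega) (by omega)
        have h2 := ih (m+1) (by omega) (by omega)
        have hr := rowS m (by omega)
        by_cases hm : m % 2 = 0
        · -- m even : coefficients a, 1 ; odd branch polynomial
          obtain ⟨t, rfl⟩ : ∃ t, m = 2*t := ⟨m/2, by omega⟩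
          rw [if_pos (by omega), if_neg (by omega)] at hr
          rw [show 2*t+1+1 = 2*t+2 by ring] at h2
          rw [show 2*t+2+1 = 2*t+3 by ring, Pol_odd d t]
          simp only [eval_neg, eval_add, eval_mul, eval_pow, eval_X, eval_C]
          have hy2 : y' (2*t+2) = -(a * y' (2*t) + d (2*t+2) * y' (2*t+1)) := by linarith
          rw [hy2]
          calc a^(2*t+3) * -(a * y' (2*t) + d (2*t+2) * y' (2*t+1))
              = -(a^3 * (a^(2*t+1) * y' (2*t)) + a * d (2*t+2) * (a^(2*t+2) * y' (2*t+1))) := by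
                ring
            _ = -(a^3 * (eval a (Pol d (2*t+1)) * y' 0)
                  + a * d (2*t+2) * (eval a (Pol d (2*t+2)) * y' 0)) := by rw [h1, h2]
            _ = -(a^3 * eval a (Pol d (2*t+1)) + a * d (2*t+2) * eval a (Pol d (2*t+2))) * y' 0 := by
                ring
        · -- m odd : coefficients 1, a ; even branch polynomial
          obtain ⟨t, rfl⟩ : ∃ t, m = 2*t+1 := ⟨m/2, by omega⟩
          rw [if_neg (by omega), if_pos (by omega)] at hr
          rw [show 2*t+1+2 = 2*t+3 by ring, show 2*t+1+1 = 2*t+2 by ring] at hr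
          rw [show 2*t+1+1 = 2*t+2 by ring] at h1
          rw [show 2*t+1+1+1 = 2*t+3 by ring, show 2*t+1+1 = 2*t+2 by ring] at h2
          rw [show 2*t+1+2+1 = 2*(t+1) + 2 by ring, show 2*t+1+2 = 2*t+3 by ring,
            Pol_even d (t+1), show 2*(t+1)+1 = 2*t+3 by ring, show 2*(t+1) = 2*t+2 by ring]
          simp only [eval_neg, eval_add, eval_mul, eval_X, eval_C]
          have hy2 : a * y' (2*t+3) = -(y' (2*t+1) + d (2*t+3) * y' (2*t+2)) := by linarith
          calc a^(2*t+2+2) * y' (2*t+3) = a^(2*t+3) * (a * y' (2*t+3)) := by ring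
            _ = a^(2*t+3) * -(y' (2*t+1) + d (2*t+3) * y' (2*t+2)) := by rw [hy2]
            _ = -(a * (a^(2*t+2) * y' (2*t+1)) + d (2*t+3) * (a^(2*t+3) * y' (2*t+2))) := by ring
            _ = -(a * (eval a (Pol d (2*t+2)) * y' 0)
                  + d (2*t+3) * (eval a (Pol d (2*t+3)) * y' 0)) := by rw [h1, h2]
            _ = -(a * eval a (Pol d (2*t+2)) + d (2*t+3) * eval a (Pol d (2*t+3))) * y' 0 := by
                ring
  -- y' 0 ≠ 0
  have hy'0 : y' 0 ≠ 0 := by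
    intro h0
    apply hy0
    funext j
    rcases j with ⟨j, hj⟩
    have := main j hj
    rw [h0, mul_zero] at this
    have hyj : y' j = 0 := by
      have hpow : a^(j+1) ≠ 0 := pow_ne_zero _ ha
      exact (mul_eq_zero.mp this).resolve_left hpow
    rw [hy'eq ⟨j, hj⟩]
    simpa using hyj
  -- last row
  obtain ⟨n, rfl⟩ : ∃ n, N = n+1 := ⟨N-1, by omega⟩
  have hr := rowS (2*n+1) (by omega)
  rw [if_neg (by omega), if_pos (by omega), hy'out (2*n+1+2) (by omega)] at hr
  rw [show 2*n+1+2 = 2*n+3 by ring, show 2*n+1+1 = 2*n+2 by ring] at hr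
  have h1 := main (2*n+1) (by omega)
  have h2 := main (2*n+2) (by omega)
  rw [show 2*n+1+1 = 2*n+2 by ring] at h1
  rw [show 2*n+2+1 = 2*n+3 by ring] at h2
  rw [show 2*(n+1)+1 = 2*n+3 by ring, show 2*(n+1) = 2*n+2 by ring]
  simp only [eval_add, eval_mul, eval_X, eval_C]
  have hfin : (a * eval a (Pol d (2*n+2)) + d (2*n+3) * eval a (Pol d (2*n+3))) * y' 0 = 0 := by
    calc (a * eval a (Pol d (2*n+2)) + d (2*n+3) * eval a (Pol d (2*n+3))) * y' 0
        = a * (eval a (Pol d (2*n+2)) * y' 0) + d (2*n+3) * (eval a (Pol d (2*n+3)) * y' 0) := by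
          ring
      _ = a * (a^(2*n+2) * y' (2*n+1)) + d (2*n+3) * (a^(2*n+3) * y' (2*n+2)) := by
          rw [h1, h2]
      _ = a^(2*n+3) * (1 * y' (2*n+1) + d (2*n+3) * y' (2*n+2) + a * 0) := by ring
      _ = 0 := by rw [hr, mul_zero]
  exact (mul_eq_zero.mp hfin).resolve_right hy'0

/-- Necessity for the flat band: if `λ = v_1` is an eigenvalue of `J_a` for infinitely
many `a ∈ (0,2]`, then all odd diagonal entries are equal to `v_1`. -/
theorem flat_band_necessity (N : ℕ) (hN : 1 ≤ N) (v : ℕ → ℝ)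
    (h : {a : ℝ | a ∈ Set.Ioc (0:ℝ) 2 ∧
        ∃ y : Fin (2*N+1) → ℝ, y ≠ 0 ∧ (Ja N a v).mulVec y = v 1 • y}.Infinite) :
    ∀ k ∈ Finset.Icc 1 N, v (2*k+1) = v 1 := by
  set d : ℕ → ℝ := fun n => v n - v 1 with hd
  set Q : ℝ[X] := X * Pol d (2*N) + C (d (2*N+1)) * Pol d (2*N+1) with hQdef
  have hsub : {a : ℝ | a ∈ Set.Ioc (0:ℝ) 2 ∧
        ∃ y : Fin (2*N+1) → ℝ, y ≠ 0 ∧ (Ja N a v).mulVec y = v 1 • y}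
      ⊆ {x : ℝ | Q.IsRoot x} := by
    rintro a ⟨⟨ha0, _⟩, y, hy0, heig⟩
    exact key_eval N hN v a (ne_of_gt ha0) y hy0 heig
  have hQ0 : Q = 0 := Polynomial.eq_zero_of_infinite_isRoot Q (h.mono hsub)
  intro k hk
  rw [Finset.mem_Icc] at hk
  have := Pol_down d N hQ0 k hk.1 hk.2
  have : v (2*k+1) - v 1 = 0 := this
  linarith
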